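/- Let S be a finite orthodox 0-rectangular band, let a, b ∈ S be nonzero, and let e, f ∈ S be idempotents with e R a and f L a. Then b ∈ V(a) if and only if the R-class of b meets V(f) and the L-class of b meets V(e). -/

import Mathlib

variable {S : Type*}

/-- `b` is an inverse of `a`: `a*b*a = a` and `b*a*b = b`. -/
def IsInverseOf [Semigroup S] (b a : S) : Prop := a * b * a = a ∧ b * a * b = b

/-- `invs a` is the set `V(a)` of inverses of `a`. -/
def invs [Semigroup S] (a : S) : Set S := {b | IsInverseOf b a}

/-- `invsSet A` is `V(A) = ⋃ a ∈ A, V(a)`. -/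
def invsSet [Semigroup S] (A : Set S) : Set S := ⋃ a ∈ A, invs a

/-- A semigroup is regular if every element has an inverse. -/
def IsRegularSemigroup (S : Type*) [Semigroup S] : Prop := ∀ a : S, ∃ b, IsInverseOf b a

/-- A permutation matching: a bijection sending each element to one of its inverses. -/
def IsPermMatching [Semigroup S] (f : S → S) : Prop :=
  Function.Bijective f ∧ ∀ a, f a ∈ invs a

def lSet [Semigroup S] (a : S) : Set S := insert a {x | ∃ s, s * a = x}
def rSet [Semigroup S] (a : S) : Set S := insert a {x | ∃ s, a * s = x}
/-- Green's L relation. -/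
def greenL [Semigroup S] (a b : S) : Prop := lSet a = lSet b
/-- Green's R relation. -/
def greenR [Semigroup S] (a b : S) : Prop := rSet a = rSet b
/-- Green's H relation. -/
def greenH [Semigroup S] (a b : S) : Prop := greenL a b ∧ greenR a b
/-- Green's D relation. -/
def greenD [Semigroup S] (a b : S) : Prop := ∃ c, greenL a c ∧ greenR c b
def dClass [Semigroup S] (a : S) : Set S := {b | greenD a b}
def lClass [Semigroup S] (a : S) : Set S := {b | greenL a b}
def rClass [Semigroup S] (a : S) : Set S := {b | greenR a b}

/-- `spow x n = x^(n+1)` (positive powers in a semigroup). -/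
def spow [Semigroup S] (x : S) : ℕ → S
  | 0 => x
  | n + 1 => spow x n * x

/-- `e` is an idempotent positive power of `x`; in a finite semigroup this
characterises `e = x^ω`. -/
def IsOmega [Semigroup S] (x e : S) : Prop := (∃ k : ℕ, e = spow x k) ∧ e * e = e

/-- `y = x^(ω-1)`: `y = x^m` for the least positive `m` with `x^(m+1)` idempotent
(in a finite semigroup `x^(m+1)` idempotent iff `x^(m+1) = x^ω`). Here `m = k+1`. -/
def IsOmegaMinusOne [Semigroup S] (x y : S) : Prop :=
  ∃ k : ℕ, y = spow x k ∧ spow x (k+1) * spow x (k+1) = spow x (k+1) ∧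
    ∀ j < k, ¬ (spow x (j+1) * spow x (j+1) = spow x (j+1))

section helpers
variable [Semigroup S]

lemma mem_rSet_self' (a : S) : a ∈ rSet a := Set.mem_insert _ _
lemma mul_mem_rSet' (a s : S) : a * s ∈ rSet a := Set.mem_insert_of_mem _ ⟨s, rfl⟩
lemma mem_lSet_self' (a : S) : a ∈ lSet a := Set.mem_insert _ _
lemma mul_mem_lSet' (a s : S) : s * a ∈ lSet a := Set.mem_insert_of_mem _ ⟨s, rfl⟩

lemma mem_rSet_iff' {x w : S} : x ∈ rSet w ↔ x = w ∨ ∃ s, w * s = x := Set.mem_insert_iff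
lemma mem_lSet_iff' {x w : S} : x ∈ lSet w ↔ x = w ∨ ∃ s, s * w = x := Set.mem_insert_iff

lemma rSet_subset' {x w : S} (h : x ∈ rSet w) : rSet x ⊆ rSet w := by
  rcases mem_rSet_iff'.mp h with h | ⟨s, hs⟩
  · subst h; exact subset_rfl
  · subst hs
    intro v hv
    rcases mem_rSet_iff'.mp hv with h | ⟨t, ht⟩
    · subst h; exact mul_mem_rSet' _ _
    · subst ht; rw [mul_assoc]; exact mul_mem_rSet' _ _

lemma lSet_subset' {x w : S} (h : x ∈ lSet w) : lSet x ⊆ lSet w := by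
  rcases mem_lSet_iff'.mp h with h | ⟨s, hs⟩
  · subst h; exact subset_rfl
  · subst hs
    intro v hv
    rcases mem_lSet_iff'.mp hv with h | ⟨t, ht⟩
    · subst h; exact mul_mem_lSet' _ _
    · subst ht; rw [← mul_assoc]; exact mul_mem_lSet' _ _

lemma greenR_of_mem' {x w : S} (h1 : x ∈ rSet w) (h2 : w ∈ rSet x) : greenR x w :=
  Set.Subset.antisymm (rSet_subset' h1) (rSet_subset' h2)

lemma greenL_of_mem' {x w : S} (h1 : x ∈ lSet w) (h2 : w ∈ lSet x) : greenL x w :=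
  Set.Subset.antisymm (lSet_subset' h1) (lSet_subset' h2)

lemma spow_succ' (x : S) (n : ℕ) : spow x (n+1) = spow x n * x := rfl

lemma spow_add' (c : S) (m n : ℕ) : spow c m * spow c n = spow c (m + n + 1) := by
  induction n with
  | zero => rfl
  | succ n ih =>
    calc spow c m * spow c (n+1) = (spow c m * spow c n) * c := by
          rw [spow_succ' c n, mul_assoc]
      _ = spow c (m+n+1) * c := by rw [ih]
      _ = spow c (m+(n+1)+1) := rfl

lemma spow_comm' (c : S) (n : ℕ) : c * spow c n = spow c (n+1) := by
  have h := spow_add' c 0 n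
  rw [zero_add] at h
  exact h

lemma exists_idem_spow' [Finite S] (c : S) : ∃ k, spow c k * spow c k = spow c k := by
  obtain ⟨i, j, hij, hspow⟩ := Finite.exists_ne_map_eq_of_infinite (spow c)
  wlog hlt : i < j generalizing i j
  · exact this j i hij.symm hspow.symm (by omega)
  set p := j - i with hp
  have hp1 : 1 ≤ p := by omega
  have hstep : ∀ t, spow c (i + p + t) = spow c (i + t) := by
    intro t
    induction t with
    | zero =>
      rw [show i + p + 0 = j by omega, show i + 0 = i by omega]
      exact hspow.symm
    | succ t ih =>
      rw [show i + p + (t+1) = (i + p + t) + 1 by omega,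
        show i + (t+1) = (i + t) + 1 by omega, spow_succ', spow_succ', ih]
  have key : ∀ r t, spow c (i + t + r * p) = spow c (i + t) := by
    intro r
    induction r with
    | zero => intro t; norm_num
    | succ r ih =>
      intro t
      rw [show i + t + (r+1) * p = i + p + (t + r * p) by ring, hstep (t + r * p),
        show i + (t + r * p) = i + t + r * p by ring, ih t]
  obtain ⟨q, hq1, hq2⟩ : ∃ q : ℕ, i + 1 ≤ q ∧ q = (i+1) * p :=
    ⟨(i+1) * p, Nat.le_mul_of_pos_right _ hp1, rfl⟩
  refine ⟨q - 1, ?_⟩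
  rw [spow_add']
  have e1 : q - 1 + (q - 1) + 1 = i + (q - 1 - i) + (i+1) * p := by omega
  have e2 : i + (q - 1 - i) = q - 1 := by omega
  rw [e1, key (i+1) (q - 1 - i), e2]

/-- right stability -/
lemma rstab' [Finite S] {x s c : S} (h : x = s * (x * c)) : x ∈ rSet (x * c) := by
  obtain ⟨k, hk⟩ := exists_idem_spow' c
  have key : ∀ n, x = spow s n * (x * spow c n) := by
    intro n
    induction n with
    | zero => exact h
    | succ n ih =>
      calc x = spow s n * (x * spow c n) := ih
        _ = spow s n * ((s * (x * c)) * spow c n) := by rw [← h]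
        _ = (spow s n * s) * (x * (c * spow c n)) := by simp only [mul_assoc]
        _ = spow s (n+1) * (x * spow c (n+1)) := by rw [spow_comm', ← spow_succ']
  have hx : x = spow s k * (x * spow c k) := key k
  have hxe : x * spow c k = x := by
    calc x * spow c k = (spow s k * (x * spow c k)) * spow c k :=
          congrArg (· * spow c k) hx
      _ = spow s k * (x * (spow c k * spow c k)) := by simp only [mul_assoc]
      _ = spow s k * (x * spow c k) := by rw [hk]
      _ = x := hx.symm
  cases k with
  | zero => exact mem_rSet_iff'.mpr (Or.inl hxe.symm)
  | succ m =>
    refine mem_rSet_iff'.mpr (Or.inr ⟨spow c m, ?_⟩)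
    rw [mul_assoc, spow_comm']
    exact hxe

/-- left stability -/
lemma lstab' [Finite S] {y t c : S} (h : y = (c * y) * t) : y ∈ lSet (c * y) := by
  obtain ⟨k, hk⟩ := exists_idem_spow' c
  have key : ∀ n, y = (spow c n * y) * spow t n := by
    intro n
    induction n with
    | zero => exact h
    | succ n ih =>
      calc y = (spow c n * y) * spow t n := ih
        _ = (spow c n * ((c * y) * t)) * spow t n := by rw [← h]
        _ = (spow c n * c) * (y * (t * spow t n)) := by simp only [mul_assoc]
        _ = spow c (n+1) * (y * spow t (n+1)) := by rw [spow_comm', ← spow_succ']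
        _ = (spow c (n+1) * y) * spow t (n+1) := by rw [mul_assoc]
  have hy : y = (spow c k * y) * spow t k := key k
  have hey : spow c k * y = y := by
    calc spow c k * y = spow c k * ((spow c k * y) * spow t k) :=
          congrArg (spow c k * ·) hy
      _ = (spow c k * spow c k) * (y * spow t k) := by simp only [mul_assoc]
      _ = (spow c k * y) * spow t k := by rw [hk, mul_assoc]
      _ = y := hy.symm
  cases k with
  | zero => exact mem_lSet_iff'.mpr (Or.inl hey.symm)
  | succ m =>
    refine mem_lSet_iff'.mpr (Or.inr ⟨spow c m, ?_⟩)
    rw [← mul_assoc, ← spow_succ']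
    exact hey

/-- nonvanishing of a product depends only on the L-class of the left factor
and the R-class of the right factor. -/
lemma transfer_ne' {z : S} (hz : ∀ x : S, z * x = z ∧ x * z = z)
    {x x' y y' : S} (hL : greenL x x') (hR : greenR y y') (h : x * y ≠ z) :
    x' * y' ≠ z := by
  intro hzz
  apply h
  have hx : x ∈ lSet x' := hL ▸ mem_lSet_self' x
  have hy : y ∈ rSet y' := hR ▸ mem_rSet_self' y
  rcases mem_lSet_iff'.mp hx with hx | ⟨s, hs⟩ <;>
    rcases mem_rSet_iff'.mp hy with hy | ⟨t, ht⟩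
  · rw [hx, hy, hzz]
  · rw [hx, ← ht, ← mul_assoc, hzz]; exact (hz t).1
  · rw [hy, ← hs, mul_assoc, hzz]; exact (hz s).2
  · rw [← hs, ← ht, mul_assoc, ← mul_assoc x', hzz]
    rw [(hz t).1]; exact (hz s).2

/-- In a finite 0-simple semigroup, a nonzero product `x*y` is R-related to `x`
and L-related to `y`. -/
lemma green_of_mul_ne' [Finite S] {z : S}
    (hsimple : ∀ I : Set S, I.Nonempty → (∀ a ∈ I, ∀ s : S, s * a ∈ I ∧ a * s ∈ I) →
      I = {z} ∨ I = Set.univ)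
    {x y : S} (h : x * y ≠ z) : greenR x (x * y) ∧ greenL y (x * y) := by
  set w := x * y with hw
  set I : Set S := {v | v = w ∨ (∃ s, v = s * w) ∨ (∃ s, v = w * s) ∨ ∃ s t, v = (s * w) * t}
    with hI
  have hclosed : ∀ a ∈ I, ∀ s : S, s * a ∈ I ∧ a * s ∈ I := by
    rintro v (rfl | ⟨u, rfl⟩ | ⟨u, rfl⟩ | ⟨u, u', rfl⟩) s
    · exact ⟨Or.inr (Or.inl ⟨s, rfl⟩), Or.inr (Or.inr (Or.inl ⟨s, rfl⟩))⟩
    · exact ⟨Or.inr (Or.inl ⟨s * u, (mul_assoc s u w).symm⟩),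
        Or.inr (Or.inr (Or.inr ⟨u, s, rfl⟩))⟩
    · exact ⟨Or.inr (Or.inr (Or.inr ⟨s, u, by simp [mul_assoc]⟩)),
        Or.inr (Or.inr (Or.inl ⟨u * s, mul_assoc w u s⟩))⟩
    · exact ⟨Or.inr (Or.inr (Or.inr ⟨s * u, u', by simp [mul_assoc]⟩)),
        Or.inr (Or.inr (Or.inr ⟨u, u' * s, by simp [mul_assoc]⟩))⟩
  have hIuniv : I = Set.univ := by
    rcases hsimple I ⟨w, Or.inl rfl⟩ hclosed with h1 | h1
    · exfalso; apply h
      have : w ∈ I := Or.inl rfl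
      rw [h1] at this
      exact this
    · exact h1
  constructor
  · refine greenR_of_mem' ?_ (mul_mem_rSet' x y)
    have hxI : x ∈ I := by rw [hIuniv]; trivial
    rcases hxI with h1 | ⟨s, h1⟩ | ⟨s, h1⟩ | ⟨s, t, h1⟩
    · rw [h1]; exact mem_rSet_self' _
    · have : x = s * (x * y) := h1
      exact rstab' this
    · rw [h1]; exact mul_mem_rSet' _ _
    · have h2 : x = s * (x * (y * t)) := by
        calc x = (s * w) * t := h1
          _ = s * (x * (y * t)) := by rw [hw]; simp [mul_assoc]
      have h3 : x ∈ rSet (x * (y * t)) := rstab' h2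
      have h4 : x * (y * t) ∈ rSet (x * y) := by
        rw [← mul_assoc]; exact mul_mem_rSet' _ _
      exact rSet_subset' h4 h3
  · refine greenL_of_mem' ?_ (mul_mem_lSet' y x)
    have hyI : y ∈ I := by rw [hIuniv]; trivial
    rcases hyI with h1 | ⟨s, h1⟩ | ⟨s, h1⟩ | ⟨s, t, h1⟩
    · rw [h1]; exact mem_lSet_self' _
    · rw [h1]; exact mul_mem_lSet' _ _
    · have : y = (x * y) * s := h1
      exact lstab' this
    · have h2 : y = ((s * x) * y) * t := by
        calc y = (s * w) * t := h1
          _ = ((s * x) * y) * t := by rw [hw]; simp [mul_assoc]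
      have h3 : y ∈ lSet ((s * x) * y) := lstab' h2
      have h4 : (s * x) * y ∈ lSet (x * y) := by
        rw [mul_assoc]; exact mul_mem_lSet' _ _
      exact lSet_subset' h4 h3

lemma idem_L' {g h : S} (hg : g * g = g) (hh : h * h = h) (hgh : greenL g h) :
    g * h = g ∧ h * g = h := by
  have h1 : g ∈ lSet h := hgh ▸ mem_lSet_self' g
  have h2 : h ∈ lSet g := hgh.symm ▸ mem_lSet_self' h
  constructor
  · rcases mem_lSet_iff'.mp h1 with h3 | ⟨u, h3⟩
    · rw [h3]; exact hh
    · rw [← h3, mul_assoc, hh]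
  · rcases mem_lSet_iff'.mp h2 with h3 | ⟨u, h3⟩
    · rw [h3]; exact hg
    · rw [← h3, mul_assoc, hg]

lemma idem_R' {g h : S} (hg : g * g = g) (hh : h * h = h) (hgh : greenR g h) :
    g * h = h ∧ h * g = g := by
  have h1 : g ∈ rSet h := hgh ▸ mem_rSet_self' g
  have h2 : h ∈ rSet g := hgh.symm ▸ mem_rSet_self' h
  constructor
  · rcases mem_rSet_iff'.mp h2 with h3 | ⟨u, h3⟩
    · rw [← h3]; exact hh
    · rw [← h3, ← mul_assoc, hg]
  · rcases mem_rSet_iff'.mp h1 with h3 | ⟨u, h3⟩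
    · rw [← h3]; exact hg
    · rw [← h3, ← mul_assoc, hh]

end helpers

/-- Lemma 3.4(i). In a finite orthodox 0-rectangular band, with `a, b`
nonzero, `e, f` idempotents, `e R a` and `f L a`: `b ∈ V(a)` iff the R-class of `b`
meets `V(f)` and the L-class of `b` meets `V(e)`. -/
theorem stmt_17 (S : Type*) [Semigroup S] [Fintype S]
    (z : S) (hz : ∀ x : S, z * x = z ∧ x * z = z)
    (hreg : IsRegularSemigroup S)
    (horth : ∀ e f : S, e * e = e → f * f = f → (e * f) * (e * f) = e * f)
    (h0simple : (∃ a b : S, a * b ≠ z) ∧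
      ∀ I : Set S, I.Nonempty → (∀ a ∈ I, ∀ s : S, s * a ∈ I ∧ a * s ∈ I) →
        I = {z} ∨ I = Set.univ)
    (hH : ∀ a b : S, greenH a b → a = b)
    (a b : S) (ha : a ≠ z) (hb : b ≠ z)
    (e f : S) (hee : e * e = e) (hff : f * f = f)
    (hea : greenR e a) (hfa : greenL f a) :
    b ∈ invs a ↔
      (rClass b ∩ invs f).Nonempty ∧ (lClass b ∩ invs e).Nonempty := by
  have hsimple := h0simple.2
  simp only [Set.Nonempty, Set.mem_inter_iff, rClass, lClass, invs, IsInverseOf,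
    Set.mem_setOf_eq]
  constructor
  · rintro ⟨haba, hbab⟩
    have hba_idem : (b * a) * (b * a) = b * a := by
      calc (b * a) * (b * a) = b * (a * b * a) := by simp only [mul_assoc]
        _ = b * a := by rw [haba]
    have hab_idem : (a * b) * (a * b) = a * b := by
      calc (a * b) * (a * b) = a * (b * a * b) := by simp only [mul_assoc]
        _ = a * b := by rw [hbab]
    have hLa_ba : greenL a (b * a) := by
      refine greenL_of_mem' ?_ (mul_mem_lSet' a b)
      refine mem_lSet_iff'.mpr (Or.inr ⟨a, ?_⟩)
      rw [← mul_assoc]; exact haba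
    have hRa_ab : greenR a (a * b) := by
      refine greenR_of_mem' ?_ (mul_mem_rSet' a b)
      exact mem_rSet_iff'.mpr (Or.inr ⟨a, haba⟩)
    have hLf_ba : greenL f (b * a) := hfa.trans hLa_ba
    have hRe_ab : greenR e (a * b) := hea.trans hRa_ab
    obtain ⟨hf1, hf2⟩ := idem_L' hff hba_idem hLf_ba
    obtain ⟨he1, he2⟩ := idem_R' hee hab_idem hRe_ab
    constructor
    · refine ⟨b * a, ?_, ?_, ?_⟩
      · refine greenR_of_mem' ?_ (mul_mem_rSet' b a)
        exact mem_rSet_iff'.mpr (Or.inr ⟨b, hbab⟩)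
      · rw [hf1]; exact hff
      · rw [hf2]; exact hba_idem
    · refine ⟨a * b, ?_, ?_, ?_⟩
      · refine greenL_of_mem' ?_ (mul_mem_lSet' b a)
        refine mem_lSet_iff'.mpr (Or.inr ⟨b, ?_⟩)
        rw [← mul_assoc]; exact hbab
      · rw [he1]; exact he2
      · rw [he2]; exact he1
  · rintro ⟨⟨c, hbc, hfcf, hcfc⟩, ⟨d, hbd, hede, hded⟩⟩
    have hfz : f ≠ z := by
      intro h0
      apply ha
      have h1 : a ∈ lSet f := hfa.symm ▸ mem_lSet_self' a
      rcases mem_lSet_iff'.mp h1 with h1 | ⟨s, h1⟩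
      · rw [h1, h0]
      · rw [← h1, h0]; exact (hz s).2
    have hez : e ≠ z := by
      intro h0
      apply ha
      have h1 : a ∈ rSet e := hea.symm ▸ mem_rSet_self' a
      rcases mem_rSet_iff'.mp h1 with h1 | ⟨s, h1⟩
      · rw [h1, h0]
      · rw [← h1, h0]; exact (hz s).1
    have hfc : f * c ≠ z := by
      intro h0
      apply hfz
      rw [← hfcf, h0]; exact (hz f).1
    have hde : d * e ≠ z := by
      intro h0
      apply hez
      have h1 : e * (d * e) = e := by rw [← mul_assoc]; exact hede
      rw [← h1, h0]; exact (hz e).2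
    have hab : a * b ≠ z := transfer_ne' hz hfa hbc.symm hfc
    have hba : b * a ≠ z := transfer_ne' hz hbd.symm hea hde
    obtain ⟨hRab, hLab⟩ := green_of_mul_ne' hsimple hab
    obtain ⟨hRba, hLba⟩ := green_of_mul_ne' hsimple hba
    have haba_ne : (a * b) * a ≠ z := transfer_ne' hz hLab (rfl : greenR a a) hba
    obtain ⟨hRaba, hLaba⟩ := green_of_mul_ne' hsimple haba_ne
    have h1 : a * b * a = a := (hH a (a * b * a) ⟨hLaba, hRab.trans hRaba⟩).symm
    have hbab_ne : (b * a) * b ≠ z := by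
      have h2 : b * (a * b) ≠ z := transfer_ne' hz (rfl : greenL b b) hRab hba
      rw [← mul_assoc] at h2
      exact h2
    obtain ⟨hRbab', hLbab⟩ := green_of_mul_ne' hsimple hbab_ne
    have hbab_ne2 : b * (a * b) ≠ z := by rw [← mul_assoc]; exact hbab_ne
    obtain ⟨hRbab, _⟩ := green_of_mul_ne' hsimple hbab_ne2
    have hRb_bab : greenR b (b * a * b) := by
      have : b * (a * b) = b * a * b := (mul_assoc b a b).symm
      rw [this] at hRbab
      exact hRbab
    have h2 : b * a * b = b := (hH b (b * a * b) ⟨hLbab, hRb_bab⟩).symm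
    exact ⟨h1, h2⟩
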